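/- For all real x, y with 0 < x ≤ y ≤ 1, the quantity (x² + y² − x(1+y)) / (√(x²+y²) · √((y−x)² + (1−y)² + (1−x)²)) lies in the interval [−1/2, 1/√2]; moreover the value −1/2 is attained whenever y = x ∈ (0,1). -/
import Mathlib

set_option maxHeartbeats 1000000 in
lemma aux_lower (x y : ℝ) (hx : 0 < x) (hxy : x ≤ y) (hy : y ≤ 1) :
    4 * (x ^ 2 + y ^ 2 - x * (1 + y)) ^ 2 ≤
      (x ^ 2 + y ^ 2) * ((y - x) ^ 2 + (1 - y) ^ 2 + (1 - x) ^ 2) ∨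
    0 ≤ x ^ 2 + y ^ 2 - x * (1 + y) := by
  rcases le_or_gt 0 (x ^ 2 + y ^ 2 - x * (1 + y)) with h | h
  · exact Or.inr h
  · left
    nlinarith [sq_nonneg (y - x), sq_nonneg (1 - y), sq_nonneg (x + y - 1),
      mul_nonneg (sub_nonneg.2 hxy) (sub_nonneg.2 hy), hx.le,
      mul_nonneg hx.le (sub_nonneg.2 hxy), mul_nonneg hx.le (sub_nonneg.2 hy),
      sq_nonneg (x*y - x), sq_nonneg (x - y*y)]

set_option maxHeartbeats 1000000 in
lemma aux_upper (x y : ℝ) (hx : 0 < x) (hxy : x ≤ y) (hy : y ≤ 1) :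
    2 * (x ^ 2 + y ^ 2 - x * (1 + y)) ^ 2 ≤
      (x ^ 2 + y ^ 2) * ((y - x) ^ 2 + (1 - y) ^ 2 + (1 - x) ^ 2) := by
  nlinarith [sq_nonneg (y - x), sq_nonneg (1 - y), sq_nonneg (x + y - 1),
    mul_nonneg (sub_nonneg.2 hxy) (sub_nonneg.2 hy), hx.le,
    mul_nonneg hx.le (sub_nonneg.2 hxy), mul_nonneg hx.le (sub_nonneg.2 hy),
    sq_nonneg (x*y - x), sq_nonneg (x - y*y)]

/-- for `0 < x ≤ y ≤ 1` the quantity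
`(x² + y² − x(1+y)) / (√(x²+y²) · √((y−x)² + (1−y)² + (1−x)²))` lies in `[−1/2, 1/√2]`,
and it equals `−1/2` whenever `y = x ∈ (0,1)`. -/
theorem stmt_19 :
    (∀ x y : ℝ, 0 < x → x ≤ y → y ≤ 1 →
      -(1 / 2) ≤ (x ^ 2 + y ^ 2 - x * (1 + y)) /
          (Real.sqrt (x ^ 2 + y ^ 2) *
            Real.sqrt ((y - x) ^ 2 + (1 - y) ^ 2 + (1 - x) ^ 2)) ∧
      (x ^ 2 + y ^ 2 - x * (1 + y)) /
          (Real.sqrt (x ^ 2 + y ^ 2) *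
            Real.sqrt ((y - x) ^ 2 + (1 - y) ^ 2 + (1 - x) ^ 2)) ≤ 1 / Real.sqrt 2) ∧
    (∀ x : ℝ, 0 < x → x < 1 →
      (x ^ 2 + x ^ 2 - x * (1 + x)) /
          (Real.sqrt (x ^ 2 + x ^ 2) *
            Real.sqrt ((x - x) ^ 2 + (1 - x) ^ 2 + (1 - x) ^ 2)) = -(1 / 2)) := by
  constructor
  · intro x y hx hxy hy
    set N := x ^ 2 + y ^ 2 - x * (1 + y) with hNdef
    set A2 := x ^ 2 + y ^ 2 with hA2
    set B2 := (y - x) ^ 2 + (1 - y) ^ 2 + (1 - x) ^ 2 with hB2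
    have hA2pos : 0 < A2 := by positivity
    have hB2nn : 0 ≤ B2 := by positivity
    have hAB : Real.sqrt A2 * Real.sqrt B2 = Real.sqrt (A2 * B2) :=
      (Real.sqrt_mul hA2pos.le _).symm
    rcases eq_or_lt_of_le hB2nn with hB0 | hB2pos
    · rw [← hB0]
      simp only [Real.sqrt_zero, mul_zero, div_zero]
      constructor
      · norm_num
      · positivity
    · have hDpos : 0 < Real.sqrt A2 * Real.sqrt B2 := by
        rw [hAB]; exact Real.sqrt_pos.2 (mul_pos hA2pos hB2pos)
      constructor
      · rw [le_div_iff₀ hDpos]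
        have : - (2 * N) ≤ Real.sqrt (A2 * B2) := by
          rcases le_or_gt 0 N with h' | h'
          · have := Real.sqrt_nonneg (A2 * B2); linarith
          · rcases aux_lower x y hx hxy hy with hkey | hpos
            · rw [show -(2*N) = Real.sqrt ((2*N)^2) by
                rw [Real.sqrt_sq_eq_abs, abs_of_nonpos (by linarith)]]
              apply Real.sqrt_le_sqrt
              nlinarith
            · linarith
        rw [hAB]; linarith
      · rw [div_le_div_iff₀ hDpos (Real.sqrt_pos.2 (by norm_num : (0:ℝ) < 2))]
        rcases le_or_gt N 0 with h | h
        · have h1 : N * Real.sqrt 2 ≤ 0 :=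
            mul_nonpos_of_nonpos_of_nonneg h (Real.sqrt_nonneg 2)
          nlinarith [hDpos]
        · have key : N * Real.sqrt 2 ≤ Real.sqrt (A2 * B2) := by
            rw [show N * Real.sqrt 2 = Real.sqrt (N^2 * 2) by
              rw [Real.sqrt_mul (sq_nonneg N), Real.sqrt_sq h.le]]
            apply Real.sqrt_le_sqrt
            have := aux_upper x y hx hxy hy
            nlinarith
          calc N * Real.sqrt 2 ≤ Real.sqrt (A2 * B2) := key
            _ = 1 * (Real.sqrt A2 * Real.sqrt B2) := by rw [hAB, one_mul]
  · intro x hx hx1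
    have h1 : Real.sqrt (x ^ 2 + x ^ 2) = x * Real.sqrt 2 := by
      rw [show x ^ 2 + x ^ 2 = x^2 * 2 by ring, Real.sqrt_mul (sq_nonneg x),
        Real.sqrt_sq hx.le]
    have h2 : Real.sqrt ((x - x) ^ 2 + (1 - x) ^ 2 + (1 - x) ^ 2) = (1 - x) * Real.sqrt 2 := by
      rw [show (x - x) ^ 2 + (1 - x) ^ 2 + (1 - x) ^ 2 = (1-x)^2 * 2 by ring,
        Real.sqrt_mul (sq_nonneg _), Real.sqrt_sq (by linarith)]
    have h3 : x * Real.sqrt 2 * ((1 - x) * Real.sqrt 2) = 2 * (x * (1 - x)) := by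
      have : Real.sqrt 2 * Real.sqrt 2 = 2 := Real.mul_self_sqrt (by norm_num)
      nlinarith [this]
    rw [h1, h2, h3, show x ^ 2 + x ^ 2 - x * (1 + x) = -(x * (1 - x)) by ring]
    have hne : (2:ℝ) * (x * (1 - x)) ≠ 0 := by
      have : 0 < 1 - x := by linarith
      positivity
    rw [div_eq_iff hne]; ring
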